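/- arXiv:1111.3845 — 3 statements merged into one kernel-verified Lean document; each statement's English description precedes it below -/
import Mathlib

section
/- Let A be a ring, S a set, E an equivalence relation on S, and suppose a family (a_x)_{x∈S} of elements of A, with finite support, satisfies ∑_{x' ∈ x̄} a_{x'} = 0 for every equivalence class x̄ ∈ S/E. Then the element ∑_{x∈S} a_x·x of the free A-module on S lies in the submodule generated by {x' − x : (x,x') ∈ E}. -/
open scoped Classical

/-- If a finitely supported family `(a_x)_{x∈S}` in `A` satisfies
`∑_{x' ∈ x̄} a_{x'} = 0` for every equivalence class `x̄ ∈ S/E`, then `∑ a_x · x`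
lies in the submodule generated by the elements `x' - x` with `(x,x') ∈ E`. -/
theorem stmt3 (A : Type*) [Ring A] (S : Type*) (E : Setoid S) (a : S →₀ A)
    (h : ∀ c : Quotient E,
      (∑ x ∈ a.support.filter (fun x => Quotient.mk E x = c), a x) = 0) :
    a ∈ Submodule.span A
        {f : S →₀ A | ∃ x x' : S, E.r x x' ∧
          f = Finsupp.single x' (1 : A) - Finsupp.single x (1 : A)} := by
  set rep : S → S := fun x => (Quotient.mk E x).out with hrep
  have h2 : ∑ x ∈ a.support, a x • Finsupp.single (rep x) (1 : A) = 0 := by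
    rw [← Finset.sum_fiberwise_of_maps_to (g := fun x => Quotient.mk E x)
        (t := a.support.image (Quotient.mk E))
        (fun x hx => Finset.mem_image_of_mem _ hx)]
    refine Finset.sum_eq_zero fun c _ => ?_
    have hr : ∀ x ∈ a.support.filter (fun x => Quotient.mk E x = c),
        a x • Finsupp.single (rep x) (1 : A) = a x • Finsupp.single c.out (1 : A) := by
      intro x hx
      rw [hrep]
      simp only [(Finset.mem_filter.mp hx).2]
    rw [Finset.sum_congr rfl hr, ← Finset.sum_smul, h c, zero_smul]
  have key : a = ∑ x ∈ a.support,
      a x • (Finsupp.single x (1 : A) - Finsupp.single (rep x) (1 : A)) := by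
    have h1 : a = ∑ x ∈ a.support, a x • Finsupp.single x (1 : A) := by
      conv_lhs => rw [← Finsupp.sum_single a]
      exact Finset.sum_congr rfl fun x _ => by
        rw [Finsupp.smul_single, smul_eq_mul, mul_one]
    simp only [smul_sub, Finset.sum_sub_distrib, h2, sub_zero]
    exact h1
  rw [key]
  refine Submodule.sum_mem _ fun x _ => Submodule.smul_mem _ _ (Submodule.subset_span ?_)
  refine ⟨rep x, x, ?_, rfl⟩
  exact Quotient.exact (Quotient.out_eq _)
end

section
/- Let k be a commutative ring, A a k-algebra, Q a quiver, and R a set of pairs of parallel paths of Q. For each pair of vertices i,j, the component at (i,j) of the two-sided ideal ⟨R⟩_A of the quiver algebra AQ generated by the elements g − h with (g,h) ∈ R equals the A-submodule of AQ(i,j) generated by the elements g − h with (g,h) ∈ R^#(i,j), where R^# is the congruence on ℙQ generated by R. -/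
open Quiver Finsupp

/-- Convolution composition in the quiver algebra `AQ`: hom-spaces are the free
`A`-modules on paths, and composition is induced by concatenation of paths
(coefficients multiply in `A`, the coefficient of the later factor on the left). -/
noncomputable def pcomp {V : Type} [Quiver.{1} V] {A : Type*} [Ring A] {i j l : V}
    (f : Path i j →₀ A) (g : Path j l →₀ A) : Path i l →₀ A :=
  f.sum fun p fp => g.sum fun q gq => Finsupp.single (p.comp q) (gq * fp)

/-- The closure `R^c` of a set of pairs of parallel paths under pre- and
post-composition with arbitrary paths. -/
def PRc {V : Type} [Quiver.{1} V] (R : ∀ ⦃i j : V⦄, Path i j → Path i j → Prop) :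
    ∀ ⦃i j : V⦄, Path i j → Path i j → Prop :=
  fun {i j} p q =>
    ∃ (i' j' : V) (α : Path i i') (a b : Path i' j') (β : Path j' j),
      R a b ∧ p = (α.comp a).comp β ∧ q = (α.comp b).comp β

/-- The congruence `R^#` on the free category `ℙQ` generated by `R`: on each hom-set
the equivalence relation generated by `R^c`. -/
def PRsharp {V : Type} [Quiver.{1} V] (R : ∀ ⦃i j : V⦄, Path i j → Path i j → Prop) :
    ∀ ⦃i j : V⦄, Path i j → Path i j → Prop :=
  fun {i j} p q => Relation.EqvGen (fun p' q' : Path i j => PRc R p' q') p q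


lemma pcomp_single_left {V : Type} [Quiver.{1} V] {A : Type*} [Ring A] {i j l : V}
    (a : Path i j) (x : A) (g : Path j l →₀ A) :
    pcomp (Finsupp.single a x) g = g.sum fun q gq => Finsupp.single (a.comp q) (gq * x) := by
  apply Finsupp.sum_single_index; simp

lemma pcomp_single_right {V : Type} [Quiver.{1} V] {A : Type*} [Ring A] {i j l : V}
    (f : Path i j →₀ A) (b : Path j l) (y : A) :
    pcomp f (Finsupp.single b y) = f.sum fun p fp => Finsupp.single (p.comp b) (y * fp) := by
  apply Finsupp.sum_congr
  intro p _
  apply Finsupp.sum_single_index; simp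

lemma pcomp_key {V : Type} [Quiver.{1} V] {A : Type*} [Ring A] {i i' j' j : V}
    (α : Path i i') (p q : Path i' j') (β : Path j' j) (x y : A) :
    pcomp (Finsupp.single α x)
        (pcomp (Finsupp.single p (1 : A) - Finsupp.single q (1 : A)) (Finsupp.single β y))
      = (y * x) • (Finsupp.single ((α.comp p).comp β) (1 : A)
          - Finsupp.single ((α.comp q).comp β) (1 : A)) := by
  rw [pcomp_single_right]
  rw [Finsupp.sum_sub_index (by intro a b1 b2; rw [mul_sub, Finsupp.single_sub])]
  rw [Finsupp.sum_single_index (by simp), Finsupp.sum_single_index (by simp)]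
  rw [pcomp_single_left]
  rw [Finsupp.sum_sub_index (by intro a b1 b2; rw [sub_mul, Finsupp.single_sub])]
  rw [Finsupp.sum_single_index (by simp), Finsupp.sum_single_index (by simp)]
  simp [Path.comp_assoc, smul_sub, Finsupp.smul_single, mul_one]

/-- The component at `(i,j)` of the two-sided ideal `⟨R⟩_A`
of the quiver algebra `AQ` generated by the elements `g - h` with `(g,h) ∈ R`
equals the `A`-submodule of `AQ(i,j)` generated by the `g - h` with `(g,h) ∈ R^#(i,j)`. -/
theorem stmt8 (k : Type*) [CommRing k] (A : Type*) [Ring A] [Algebra k A]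
    (V : Type) [Quiver.{1} V] (R : ∀ ⦃i j : V⦄, Path i j → Path i j → Prop)
    (i j : V) :
    Submodule.span A
        {f : Path i j →₀ A | ∃ (i' j' : V) (x y : A)
          (α : Path i i') (p q : Path i' j') (β : Path j' j), R p q ∧
          f = pcomp (Finsupp.single α x)
                (pcomp (Finsupp.single p (1 : A) - Finsupp.single q (1 : A))
                  (Finsupp.single β y))}
      = Submodule.span A
          {f : Path i j →₀ A | ∃ g h : Path i j, PRsharp R g h ∧
            f = Finsupp.single g (1 : A) - Finsupp.single h (1 : A)} := by
  apply le_antisymm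
  · rw [Submodule.span_le]
    rintro f ⟨i', j', x, y, α, p, q, β, hR, rfl⟩
    rw [pcomp_key]
    exact Submodule.smul_mem _ _ (Submodule.subset_span
      ⟨(α.comp p).comp β, (α.comp q).comp β,
        Relation.EqvGen.rel _ _ ⟨i', j', α, p, q, β, hR, rfl, rfl⟩, rfl⟩)
  · rw [Submodule.span_le]
    rintro f ⟨g, h, hgh, rfl⟩
    induction hgh with
    | rel g h hr =>
      obtain ⟨i', j', α, a, b, β, hR, rfl, rfl⟩ := hr
      apply Submodule.subset_span
      refine ⟨i', j', 1, 1, α, a, b, β, hR, ?_⟩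
      rw [pcomp_key]
      simp
    | refl g => simp
    | symm g h _ ih =>
      have : Finsupp.single h (1 : A) - Finsupp.single g (1 : A)
          = -(Finsupp.single g (1 : A) - Finsupp.single h (1 : A)) := by abel
      rw [this]
      exact neg_mem ih
    | trans g h l _ _ ih1 ih2 =>
      have : Finsupp.single g (1 : A) - Finsupp.single l (1 : A)
          = (Finsupp.single g (1 : A) - Finsupp.single h (1 : A))
            + (Finsupp.single h (1 : A) - Finsupp.single l (1 : A)) := by abel
      rw [this]
      exact add_mem ih1 ih2
end

section
/- Let k be a commutative ring, A a k-algebra regarded as a k-category with one object, I = ⟨Q | R⟩ a small category presented by a quiver Q with relations R, and Δ(A) : I → k-Cat the diagonal functor sending every object to A and every morphism to the identity functor. Then the Grothendieck construction Gr(Δ(A)) is isomorphic as a k-category to AQ/⟨R⟩_A, the quiver algebra of Q over A modulo the ideal generated by the elements g − h for (g,h) ∈ R. -/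
open CategoryTheory Quiver Finsupp

/-- The relation `R` viewed as a `HomRel` on the free category `ℙQ = Paths V`. -/
def pathsRel {V : Type} [Quiver.{1} V]
    (R : ∀ ⦃i j : V⦄, Path i j → Path i j → Prop) : HomRel (Paths V) :=
  fun {i j} p q => R p q

/-- The category `I = ⟨Q ∣ R⟩` presented by the quiver `V` with relations `R`:
the quotient of the free category on `V` by the congruence generated by `R`. -/
def PresCat {V : Type} [Quiver.{1} V]
    (R : ∀ ⦃i j : V⦄, Path i j → Path i j → Prop) : Type :=
  CategoryTheory.Quotient (pathsRel R)

noncomputable instance {V : Type} [Quiver.{1} V]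
    (R : ∀ ⦃i j : V⦄, Path i j → Path i j → Prop) : Category (PresCat R) :=
  inferInstanceAs (Category (CategoryTheory.Quotient (pathsRel R)))

/-- The object of `I = ⟨Q ∣ R⟩` corresponding to a vertex `i`. -/
def presObj {V : Type} [Quiver.{1} V]
    (R : ∀ ⦃i j : V⦄, Path i j → Path i j → Prop) (i : V) : PresCat R :=
  ⟨i⟩

/-- Composition in the Grothendieck construction `Gr(Δ(A))` of the diagonal functor:
hom-modules are `⨁_{a ∈ I(i,j)} A` and `(g ∘ f)_c = ∑_{c = b∘a} g_b · f_a`. -/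
noncomputable def gconv {C : Type*} [Category C] {A : Type*} [Ring A] {X Y Z : C}
    (f : (X ⟶ Y) →₀ A) (g : (Y ⟶ Z) →₀ A) : (X ⟶ Z) →₀ A :=
  f.sum fun a fa => g.sum fun b gb => Finsupp.single (a ≫ b) (gb * fa)

/-- The component at `(i,j)` of the two-sided ideal `⟨R⟩_A` of `AQ` generated by the
elements `g - h` with `(g,h) ∈ R`. -/
noncomputable def IdA {V : Type} [Quiver.{1} V] (A : Type*) [Ring A]
    (R : ∀ ⦃i j : V⦄, Path i j → Path i j → Prop) (i j : V) :
    Submodule A (Path i j →₀ A) :=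
  Submodule.span A
    {f : Path i j →₀ A | ∃ (i' j' : V) (x y : A)
      (α : Path i i') (p q : Path i' j') (β : Path j' j), R p q ∧
      f = pcomp (Finsupp.single α x)
            (pcomp (Finsupp.single p (1 : A) - Finsupp.single q (1 : A))
              (Finsupp.single β y))}

section Aux
variable {V : Type} [Quiver.{1} V] {A : Type*} [Ring A]
variable (R : ∀ ⦃i j : V⦄, Path i j → Path i j → Prop)

def qmk {i j : V} (p : Path i j) : presObj R i ⟶ presObj R j :=
  Quot.mk (@HomRel.CompClosure (Paths V) _ (pathsRel R) i j) p

lemma qmk_id (i : V) : qmk R (Path.nil : Path i i) = 𝟙 (presObj R i) := rfl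

lemma qmk_comp {i j l : V} (p : Path i j) (q : Path j l) :
    qmk R (p.comp q) = qmk R p ≫ qmk R q := rfl

lemma qmk_surj {i j : V} : Function.Surjective (qmk R (i := i) (j := j)) :=
  fun q => ⟨Quot.out q, Quot.out_eq q⟩

lemma qmk_exact {i j : V} {a b : Path i j} (h : qmk R a = qmk R b) :
    Relation.EqvGen (@HomRel.CompClosure (Paths V) _ (pathsRel R) i j) a b :=
  Quot.eqvGen_exact h

lemma qmk_sound {i j i' j' : V} (α : Path i i') (p q : Path i' j') (β : Path j' j)
    (h : R p q) : qmk R (α.comp (p.comp β)) = qmk R (α.comp (q.comp β)) :=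
  Quot.sound (HomRel.CompClosure.intro (r := pathsRel R) _ _ α p q β h)

lemma pcomp_single_single {i j l : V} (a : Path i j) (b : Path j l) (x y : A) :
    pcomp (Finsupp.single a x) (Finsupp.single b y)
      = Finsupp.single (a.comp b) (y * x) := by
  unfold pcomp
  rw [Finsupp.sum_single_index (by simp), Finsupp.sum_single_index (by simp)]

lemma pcomp_zero_left {i j l : V} (g : Path j l →₀ A) :
    pcomp (0 : Path i j →₀ A) g = 0 := Finsupp.sum_zero_index

lemma pcomp_zero_right {i j l : V} (f : Path i j →₀ A) :
    pcomp f (0 : Path j l →₀ A) = 0 := by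
  unfold pcomp; simp [Finsupp.sum_zero_index]

lemma pcomp_add_left {i j l : V} (f f' : Path i j →₀ A) (g : Path j l →₀ A) :
    pcomp (f + f') g = pcomp f g + pcomp f' g := by
  unfold pcomp
  rw [Finsupp.sum_add_index'] <;> intros <;>
    simp [mul_add, Finsupp.single_add, Finsupp.sum_add]

lemma pcomp_add_right {i j l : V} (f : Path i j →₀ A) (g g' : Path j l →₀ A) :
    pcomp f (g + g') = pcomp f g + pcomp f g' := by
  unfold pcomp
  rw [← Finsupp.sum_add]
  refine Finsupp.sum_congr fun p _ => ?_
  rw [Finsupp.sum_add_index'] <;> intros <;> simp [add_mul, Finsupp.single_add]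

lemma pcomp_sub_left {i j l : V} (f f' : Path i j →₀ A) (g : Path j l →₀ A) :
    pcomp (f - f') g = pcomp f g - pcomp f' g := by
  unfold pcomp
  rw [Finsupp.sum_sub_index]
  intros
  simp [mul_sub, Finsupp.single_sub, Finsupp.sum_sub]

lemma pcomp_sub_right {i j l : V} (f : Path i j →₀ A) (g g' : Path j l →₀ A) :
    pcomp f (g - g') = pcomp f g - pcomp f g' := by
  unfold pcomp
  rw [← Finsupp.sum_sub]
  refine Finsupp.sum_congr fun p _ => ?_
  rw [Finsupp.sum_sub_index]
  intros; simp [sub_mul, Finsupp.single_sub]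

lemma gconv_single_single {C : Type*} [Category C] {X Y Z : C}
    (a : X ⟶ Y) (b : Y ⟶ Z) (x y : A) :
    gconv (Finsupp.single a x) (Finsupp.single b y)
      = Finsupp.single (a ≫ b) (y * x) := by
  unfold gconv
  rw [Finsupp.sum_single_index (by simp), Finsupp.sum_single_index (by simp)]

lemma gconv_zero_left {C : Type*} [Category C] {X Y Z : C} (g : (Y ⟶ Z) →₀ A) :
    gconv (0 : (X ⟶ Y) →₀ A) g = 0 := Finsupp.sum_zero_index

lemma gconv_zero_right {C : Type*} [Category C] {X Y Z : C} (f : (X ⟶ Y) →₀ A) :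
    gconv f (0 : (Y ⟶ Z) →₀ A) = 0 := by
  unfold gconv; simp [Finsupp.sum_zero_index]

lemma gconv_add_left {C : Type*} [Category C] {X Y Z : C}
    (f f' : (X ⟶ Y) →₀ A) (g : (Y ⟶ Z) →₀ A) :
    gconv (f + f') g = gconv f g + gconv f' g := by
  unfold gconv
  rw [Finsupp.sum_add_index'] <;> intros <;>
    simp [mul_add, Finsupp.single_add, Finsupp.sum_add]

lemma gconv_add_right {C : Type*} [Category C] {X Y Z : C}
    (f : (X ⟶ Y) →₀ A) (g g' : (Y ⟶ Z) →₀ A) :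
    gconv f (g + g') = gconv f g + gconv f g' := by
  unfold gconv
  rw [← Finsupp.sum_add]
  refine Finsupp.sum_congr fun p _ => ?_
  rw [Finsupp.sum_add_index'] <;> intros <;> simp [add_mul, Finsupp.single_add]


lemma pcomp_rel_aux {i i' j' j : V} (α : Path i i') (p q : Path i' j') (β : Path j' j) :
    pcomp (Finsupp.single α (1 : A)) (pcomp (Finsupp.single p 1 - Finsupp.single q 1)
      (Finsupp.single β 1))
      = Finsupp.single (α.comp (p.comp β)) 1 - Finsupp.single (α.comp (q.comp β)) 1 := by
  rw [pcomp_sub_left, pcomp_single_single, pcomp_single_single,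
    pcomp_sub_right, pcomp_single_single, pcomp_single_single]
  norm_num

lemma mem_IdA_of_eqvGen {i j : V} {a b : Path i j}
    (h : Relation.EqvGen (@HomRel.CompClosure (Paths V) _ (pathsRel R) i j) a b) :
    Finsupp.single a (1 : A) - Finsupp.single b 1 ∈ IdA A R i j := by
  induction h with
  | rel a b hab =>
    obtain ⟨_, _, f, m₁, m₂, g, hr⟩ := id hab
    case _ =>
      apply Submodule.subset_span
      refine ⟨_, _, 1, 1, f, m₁, m₂, g, hr, ?_⟩
      exact (pcomp_rel_aux f m₁ m₂ g).symm
  | refl a => simp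
  | symm a b _ ih => simpa using neg_mem ih
  | trans a b c _ _ ih1 ih2 => simpa using add_mem ih1 ih2

lemma single_sub_single_mem {i j : V} {a b : Path i j} (x : A)
    (h : qmk R a = qmk R b) :
    Finsupp.single a x - Finsupp.single b x ∈ IdA A R i j := by
  have := Submodule.smul_mem (IdA A R i j) x (mem_IdA_of_eqvGen R (qmk_exact R h))
  simpa [smul_sub, Finsupp.smul_single] using this

lemma IdA_le_ker :
    ∀ {i j : V}, IdA A R i j ≤ LinearMap.ker (Finsupp.lmapDomain A A (qmk R (i := i) (j := j))) := by
  intro i j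
  rw [IdA, Submodule.span_le]
  rintro f ⟨i', j', x, y, α, p, q, β, hpq, rfl⟩
  simp only [SetLike.mem_coe, LinearMap.mem_ker]
  rw [pcomp_sub_left, pcomp_single_single, pcomp_single_single,
    pcomp_sub_right, pcomp_single_single, pcomp_single_single,
    map_sub, Finsupp.lmapDomain_apply, Finsupp.lmapDomain_apply,
    Finsupp.mapDomain_single, Finsupp.mapDomain_single,
    qmk_sound R α p q β hpq, sub_self]

lemma mapDomain_pcomp {i j l : V} (f : Path i j →₀ A) (g : Path j l →₀ A) :
    Finsupp.mapDomain (qmk R) (pcomp f g)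
      = gconv (Finsupp.mapDomain (qmk R) f) (Finsupp.mapDomain (qmk R) g) := by
  induction f using Finsupp.induction_linear with
  | zero => simp [pcomp_zero_left, gconv_zero_left]
  | add f f' ihf ihf' =>
      rw [pcomp_add_left, Finsupp.mapDomain_add, Finsupp.mapDomain_add,
        gconv_add_left, ihf, ihf']
  | single a x =>
      induction g using Finsupp.induction_linear with
      | zero => simp [pcomp_zero_right, gconv_zero_right]
      | add g g' ihg ihg' =>
          rw [pcomp_add_right, Finsupp.mapDomain_add, Finsupp.mapDomain_add,
            gconv_add_right, ihg, ihg']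
      | single b y =>
          rw [pcomp_single_single, Finsupp.mapDomain_single, Finsupp.mapDomain_single,
            Finsupp.mapDomain_single, gconv_single_single, qmk_comp]


noncomputable def Fmap (i j : V) :
    ((Path i j →₀ A) ⧸ IdA A R i j) →ₗ[A] ((presObj R i ⟶ presObj R j) →₀ A) :=
  Submodule.liftQ _ (Finsupp.lmapDomain A A (qmk R)) (IdA_le_ker R)

noncomputable def pout {i j : V} (q : presObj R i ⟶ presObj R j) : Path i j :=
  Quot.out (α := Path i j) (r := @HomRel.CompClosure (Paths V) _ (pathsRel R) i j) q

lemma qmk_pout {i j : V} (q : presObj R i ⟶ presObj R j) : qmk R (pout R q) = q :=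
  Quot.out_eq q

noncomputable def Gmap (i j : V) :
    ((presObj R i ⟶ presObj R j) →₀ A) →ₗ[A] ((Path i j →₀ A) ⧸ IdA A R i j) :=
  (IdA A R i j).mkQ ∘ₗ Finsupp.lmapDomain A A (pout R)

noncomputable def eAux (i j : V) :
    ((Path i j →₀ A) ⧸ IdA A R i j) ≃ₗ[A] ((presObj R i ⟶ presObj R j) →₀ A) := by
  refine LinearEquiv.ofLinear (Fmap R i j) (Gmap R i j) ?_ ?_
  · apply Finsupp.lhom_ext
    intro q x
    simp only [LinearMap.comp_apply, Gmap, Fmap, Finsupp.lmapDomain_apply,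
      Finsupp.mapDomain_single, Submodule.mkQ_apply, Submodule.liftQ_apply,
      LinearMap.id_apply]
    rw [qmk_pout]
  · apply Submodule.linearMap_qext
    apply Finsupp.lhom_ext
    intro a x
    simp only [LinearMap.comp_apply, Gmap, Fmap, Finsupp.lmapDomain_apply,
      Finsupp.mapDomain_single, Submodule.mkQ_apply, Submodule.liftQ_apply,
      LinearMap.id_apply]
    rw [Submodule.Quotient.eq]
    exact single_sub_single_mem R x (qmk_pout R (qmk R a))

lemma eAux_mk {i j : V} (f : Path i j →₀ A) :
    eAux R i j (Submodule.Quotient.mk f) = Finsupp.mapDomain (qmk R) f := by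
  simp only [eAux, LinearEquiv.ofLinear_apply, Fmap, Submodule.Quotient.mk''_eq_mk,
    Submodule.liftQ_apply, Finsupp.lmapDomain_apply]

end Aux

/-- For a `k`-algebra `A` and a small category `I = ⟨Q ∣ R⟩`,
the Grothendieck construction `Gr(Δ(A))` of the diagonal functor is isomorphic
to `AQ/⟨R⟩_A`: there are linear equivalences on hom-modules which are bijective on
objects (both sides have objects `Q₀`) preserving identities and composition. -/
theorem stmt10 (k : Type*) [CommRing k] (A : Type*) [Ring A] [Algebra k A]
    (V : Type) [Quiver.{1} V] (R : ∀ ⦃i j : V⦄, Path i j → Path i j → Prop) :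
    ∃ e : ∀ i j : V,
        ((Path i j →₀ A) ⧸ IdA A R i j) ≃ₗ[A] ((presObj R i ⟶ presObj R j) →₀ A),
      (∀ i : V, e i i (Submodule.Quotient.mk (Finsupp.single Path.nil (1 : A)))
          = Finsupp.single (𝟙 (presObj R i)) (1 : A)) ∧
      (∀ (i j l : V) (f : Path i j →₀ A) (g : Path j l →₀ A),
        e i l (Submodule.Quotient.mk (pcomp f g))
          = gconv (e i j (Submodule.Quotient.mk f))
              (e j l (Submodule.Quotient.mk g))) := by
  refine ⟨fun i j => eAux R i j, fun i => ?_, fun i j l f g => ?_⟩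
  · rw [eAux_mk, Finsupp.mapDomain_single, qmk_id]
  · rw [eAux_mk, eAux_mk, eAux_mk, mapDomain_pcomp]
end
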